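/- Let M = (x y; z w) ∈ SL₂(ℤ) with z ≠ 0, x > 0 and y ≠ 0, and let M' := (0 1; 1 0) M (0 1; 1 0) = (w z; y x). Then n_{M'} = -n_M, where n_M := (x+w)/z - sign(z)·(3 + 12·s(w,|z|)). -/

import Mathlib

/-- The sawtooth function ((x)). -/
def saw (x : ℚ) : ℚ := if x.den = 1 then 0 else x - ⌊x⌋ - 1/2

/-- The Dedekind sum s(h,k) = Σ_{m=1}^{k} ((hm/k))((m/k)). -/
noncomputable def dedekindSum (h k : ℤ) : ℚ :=
  ∑ m ∈ Finset.Icc (1 : ℤ) k, saw (h * m / k) * saw (m / k)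

lemma den_one_iff_fract (q : ℚ) : q.den = 1 ↔ Int.fract q = 0 := by
  rw [Rat.den_eq_one_iff, Int.fract, sub_eq_zero]
  constructor
  · intro h; rw [← h]; norm_num
  · intro h; have : (⌊q⌋ : ℚ) = q := h.symm
    rw [← this]; norm_num

lemma saw_eq (q : ℚ) : saw q = if Int.fract q = 0 then 0 else Int.fract q - 1/2 := by
  rw [saw, if_congr (den_one_iff_fract q) rfl rfl]
  rcases eq_or_ne (Int.fract q) 0 with h|h
  · rw [if_pos h, if_pos h]
  · rw [if_neg h, if_neg h, Int.fract]

lemma saw_intCast (n : ℤ) : saw n = 0 := by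
  rw [saw_eq, if_pos (Int.fract_intCast n)]

lemma saw_add_int (q : ℚ) (n : ℤ) : saw (q + n) = saw q := by
  rw [saw_eq, saw_eq, Int.fract_add_intCast]

lemma saw_neg (q : ℚ) : saw (-q) = - saw q := by
  rw [saw_eq, saw_eq]
  by_cases h : Int.fract q = 0
  · rw [if_pos h, if_pos (Int.fract_neg_eq_zero.2 h), neg_zero]
  · rw [if_neg h, if_neg (fun h' => h (Int.fract_neg_eq_zero.1 h')), Int.fract_neg h]
    ring

lemma saw_int_div (a k : ℤ) (hk : 0 < k) :
    saw ((a:ℚ)/k) = if a % k = 0 then 0 else ((a % k : ℤ):ℚ)/k - 1/2 := by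
  have hk0 : (k:ℚ) ≠ 0 := Int.cast_ne_zero.2 hk.ne'
  have hd : (a:ℚ)/k = ((a % k : ℤ):ℚ)/k + ((a / k : ℤ):ℚ) := by
    have := Int.emod_def a k
    field_simp
    push_cast [this]
    ring
  rw [hd, saw_add_int]
  rcases eq_or_ne (a % k) 0 with h|h
  · rw [if_pos h, h]; push_cast; rw [zero_div]
    exact saw_intCast 0 ▸ (by norm_num : ((0:ℤ):ℚ) = 0) ▸ saw_intCast 0
  · rw [if_neg h]
    have h0 : 0 ≤ a % k := Int.emod_nonneg a hk.ne'
    have h1 : a % k < k := Int.emod_lt_of_pos a hk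
    have hq0 : (0:ℚ) ≤ ((a % k : ℤ):ℚ)/k := by positivity
    have hq1 : ((a % k : ℤ):ℚ)/k < 1 := by
      rw [div_lt_one (by exact_mod_cast hk)]
      exact_mod_cast h1
    have hfr : Int.fract (((a % k : ℤ):ℚ)/k) = ((a % k : ℤ):ℚ)/k :=
      Int.fract_eq_self.2 ⟨hq0, hq1⟩
    rw [saw_eq, hfr, if_neg]
    intro hc
    apply h
    rw [div_eq_zero_iff] at hc
    have h2 : ((a % k : ℤ):ℚ) = 0 := hc.resolve_right hk0
    have h3 : ((a % k : ℤ):ℚ) = ((0:ℤ):ℚ) := by rw [h2]; norm_num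
    exact Int.cast_injective h3

lemma saw_mul_emod (c b k : ℤ) (hk : (k:ℚ) ≠ 0) :
    saw (((c * (b % k) : ℤ):ℚ)/k) = saw (((c * b : ℤ):ℚ)/k) := by
  have hd : ((c * (b % k) : ℤ):ℚ)/k = ((c * b : ℤ):ℚ)/k + ((-(c * (b / k)) : ℤ):ℚ) := by
    have hb := Int.emod_def b k
    field_simp
    push_cast [hb]
    ring
  rw [hd, saw_add_int]

lemma sum_reindex (k : ℤ) (hk : 0 < k) (h h' : ℤ) (hh : h * h' % k = 1 % k)
    (F : ℤ → ℚ) :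
    ∑ m ∈ Finset.Icc (1:ℤ) (k-1), F (h * m % k) = ∑ m ∈ Finset.Icc (1:ℤ) (k-1), F m := by
  have key : ∀ a b m : ℤ, a * b % k = 1 % k → 1 ≤ m → m ≤ k - 1 → b * (a * m % k) % k = m := by
    intro a b m hab h1 h2
    have : b * (a * m % k) % k = b * (a * m) % k := by
      conv_rhs => rw [Int.mul_emod]
      rw [Int.mul_emod, Int.emod_emod_of_dvd _ dvd_rfl]
    rw [this]
    have : b * (a * m) % k = (a * b % k) * m % k := by
      rw [Int.mul_emod (a*b % k) m, Int.emod_emod_of_dvd _ dvd_rfl, ← Int.mul_emod]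
      ring_nf
    rw [this, hab]
    calc 1 % k * m % k = (1 % k % k) * (m % k) % k := Int.mul_emod _ _ _
      _ = 1 % k * (m % k) % k := by rw [Int.emod_emod_of_dvd _ dvd_rfl]
      _ = 1 * m % k := (Int.mul_emod 1 m k).symm
      _ = m := by rw [one_mul, Int.emod_eq_of_lt (by omega) (by omega)]
  have hh' : h' * h % k = 1 % k := by rw [mul_comm]; exact hh
  apply Finset.sum_nbij' (i := fun m => h * m % k) (j := fun m => h' * m % k)
  · intro m hm
    simp only [Finset.mem_Icc] at hm ⊢
    have h1 : 0 ≤ h * m % k := Int.emod_nonneg _ hk.ne'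
    have h2 : h * m % k < k := Int.emod_lt_of_pos _ hk
    refine ⟨?_, by omega⟩
    by_contra hc
    have hz : h * m % k = 0 := by omega
    have := key h h' m hh hm.1 hm.2
    rw [hz] at this
    simp at this
    omega
  · intro m hm
    simp only [Finset.mem_Icc] at hm ⊢
    have h1 : 0 ≤ h' * m % k := Int.emod_nonneg _ hk.ne'
    have h2 : h' * m % k < k := Int.emod_lt_of_pos _ hk
    refine ⟨?_, by omega⟩
    by_contra hc
    have hz : h' * m % k = 0 := by omega
    have := key h' h m hh' hm.1 hm.2
    rw [hz] at this
    simp at this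
    omega
  · intro m hm
    simp only [Finset.mem_Icc] at hm
    exact key h h' m hh hm.1 hm.2
  · intro m hm
    simp only [Finset.mem_Icc] at hm
    exact key h' h m hh' hm.1 hm.2
  · intro m hm
    rfl

lemma Icc_insert_top (n : ℤ) (hn : 0 ≤ n) :
    Finset.Icc (1:ℤ) (n+1) = insert (n+1) (Finset.Icc 1 n) := by
  ext m
  simp only [Finset.mem_Icc, Finset.mem_insert]
  omega

lemma gauss_int (n : ℤ) (hn : 0 ≤ n) : 2 * ∑ m ∈ Finset.Icc (1:ℤ) n, m = n * (n+1) := by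
  refine Int.le_induction (motive := fun n _ => 2 * ∑ m ∈ Finset.Icc (1:ℤ) n, m = n * (n+1)) ?_ ?_ n hn
  · simp
  · intro n hn ih
    rw [Icc_insert_top n hn, Finset.sum_insert (by simp), mul_add, ih]
    ring

lemma gauss_q (n : ℤ) (hn : 0 ≤ n) :
    ∑ m ∈ Finset.Icc (1:ℤ) n, (m:ℚ) = (n:ℚ) * (n+1) / 2 := by
  have := gauss_int n hn
  have h2 : ((2 * ∑ m ∈ Finset.Icc (1:ℤ) n, m : ℤ) : ℚ) = ((n * (n+1) : ℤ) : ℚ) := by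
    rw [this]
  push_cast at h2
  linarith

lemma gauss_sq_q (n : ℤ) (hn : 0 ≤ n) :
    ∑ m ∈ Finset.Icc (1:ℤ) n, (m:ℚ)^2 = (n:ℚ) * (n+1) * (2*n+1) / 6 := by
  refine Int.le_induction
    (motive := fun n _ => ∑ m ∈ Finset.Icc (1:ℤ) n, (m:ℚ)^2 = (n:ℚ) * (n+1) * (2*n+1) / 6) ?_ ?_ n hn
  · simp
  · intro n hn ih
    rw [Icc_insert_top n hn, Finset.sum_insert (by simp), ih]
    push_cast
    ring

lemma card_Icc_q (n : ℤ) (hn : 0 ≤ n) : ((Finset.Icc (1:ℤ) n).card : ℚ) = (n:ℚ) := by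
  rw [Int.card_Icc]
  have : (n + 1 - 1).toNat = n.toNat := by omega
  rw [this]
  exact_mod_cast congrArg (fun z : ℤ => (z:ℚ)) (Int.toNat_of_nonneg hn)

lemma inv_emod_cancel (k a b m : ℤ) (hk : 0 < k) (hab : a * b % k = 1 % k)
    (h1 : 1 ≤ m) (h2 : m ≤ k - 1) : b * (a * m % k) % k = m := by
  have e1 : b * (a * m % k) % k = b * (a * m) % k := by
    conv_rhs => rw [Int.mul_emod]
    rw [Int.mul_emod, Int.emod_emod_of_dvd _ dvd_rfl]
  rw [e1]
  have e2 : b * (a * m) % k = (a * b % k) * m % k := by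
    rw [Int.mul_emod (a*b % k) m, Int.emod_emod_of_dvd _ dvd_rfl, ← Int.mul_emod]
    ring_nf
  rw [e2, hab]
  calc 1 % k * m % k = (1 % k % k) * (m % k) % k := Int.mul_emod _ _ _
    _ = 1 % k * (m % k) % k := by rw [Int.emod_emod_of_dvd _ dvd_rfl]
    _ = 1 * m % k := (Int.mul_emod 1 m k).symm
    _ = m := by rw [one_mul, Int.emod_eq_of_lt (by omega) (by omega)]

lemma emod_ne_zero (k a b m : ℤ) (hk : 0 < k) (hab : a * b % k = 1 % k)
    (h1 : 1 ≤ m) (h2 : m ≤ k - 1) : a * m % k ≠ 0 := by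
  intro hz
  have := inv_emod_cancel k a b m hk hab h1 h2
  rw [hz] at this
  simp at this
  omega

lemma dedekindSum_eq (h k h' : ℤ) (hk : 0 < k) (hh : h * h' % k = 1 % k) :
    dedekindSum h k
      = (∑ m ∈ Finset.Icc (1:ℤ) (k-1), (m:ℚ) * ((h*m % k : ℤ):ℚ)) / k^2 - ((k:ℚ)-1)/4 := by
  have hk0 : (k:ℚ) ≠ 0 := Int.cast_ne_zero.2 hk.ne'
  have hsplit : Finset.Icc (1:ℤ) k = insert k (Finset.Icc 1 (k-1)) := by
    ext m; simp only [Finset.mem_Icc, Finset.mem_insert]; omega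
  rw [dedekindSum, hsplit, Finset.sum_insert (by simp)]
  have t1 : (h:ℚ) * k / k = ((h:ℤ):ℚ) := by field_simp
  have t2 : (k:ℚ) / k = ((1:ℤ):ℚ) := by field_simp; norm_num
  rw [t1, t2, saw_intCast, saw_intCast, mul_zero, zero_add]
  have term : ∀ m ∈ Finset.Icc (1:ℤ) (k-1),
      saw ((h:ℚ) * m / k) * saw ((m:ℚ) / k)
        = (m:ℚ) * ((h*m % k : ℤ):ℚ)/k^2 - ((h*m % k : ℤ):ℚ)/(2*k) - (m:ℚ)/(2*k) + 1/4 := by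
    intro m hm
    simp only [Finset.mem_Icc] at hm
    have e1 : (h:ℚ) * m / k = ((h*m : ℤ):ℚ)/k := by push_cast; ring
    have e2 : (m:ℚ)/k = ((m:ℤ):ℚ)/k := rfl
    have hmod : m % k = m := Int.emod_eq_of_lt (by omega) (by omega)
    rw [e1, e2, saw_int_div _ _ hk, saw_int_div m k hk,
        if_neg (emod_ne_zero k h h' m hk hh hm.1 hm.2),
        if_neg (by rw [hmod]; omega), hmod]
    field_simp
    ring
  rw [Finset.sum_congr rfl term]
  have hr : ∑ m ∈ Finset.Icc (1:ℤ) (k-1), ((h*m % k:ℤ):ℚ) = ((k:ℚ)-1)*k/2 := by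
    have hre := sum_reindex k hk h h' hh (fun m => (m:ℚ))
    rw [hre, gauss_q (k-1) (by omega)]
    push_cast
    ring
  have hmm : ∑ m ∈ Finset.Icc (1:ℤ) (k-1), (m:ℚ) = ((k:ℚ)-1)*k/2 := by
    rw [gauss_q (k-1) (by omega)]
    push_cast
    ring
  have hcc : ((Finset.Icc (1:ℤ) (k-1)).card : ℚ) = (k:ℚ)-1 := by
    rw [card_Icc_q (k-1) (by omega)]
    push_cast
    ring
  simp only [Finset.sum_add_distrib, Finset.sum_sub_distrib, Finset.sum_const, nsmul_eq_mul,
    ← Finset.sum_div]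
  rw [hr, hmm, hcc]
  field_simp
  ring

lemma double_count (h k : ℤ) (hh : 0 < h) (hk : 0 < k) (hco : IsCoprime k h) :
    2 * (∑ m ∈ Finset.Icc (1:ℤ) (k-1), m * (h*m/k))
      + (∑ n ∈ Finset.Icc (1:ℤ) (h-1), (k*n/h) * (k*n/h + 1))
      = (h-1) * (k * (k-1)) := by
  have hne : ∀ m ∈ Finset.Icc (1:ℤ) (k-1), ∀ n : ℤ, k * n ≠ h * m := by
    intro m hm n he
    simp only [Finset.mem_Icc] at hm
    have : k ∣ h * m := ⟨n, he.symm⟩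
    have : k ∣ m := hco.dvd_of_dvd_mul_left this
    have := Int.le_of_dvd (by omega) this
    omega
  have hdivlt : ∀ m ∈ Finset.Icc (1:ℤ) (k-1), h * m / k ≤ h - 1 := by
    intro m hm
    simp only [Finset.mem_Icc] at hm
    have : h * m / k < h := by
      rw [Int.ediv_lt_iff_lt_mul hk]
      nlinarith
    omega
  have hdivlt2 : ∀ n ∈ Finset.Icc (1:ℤ) (h-1), k * n / h ≤ k - 1 := by
    intro n hn
    simp only [Finset.mem_Icc] at hn
    have : k * n / h < k := by
      rw [Int.ediv_lt_iff_lt_mul hh]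
      nlinarith
    omega
  have step1 : ∀ m ∈ Finset.Icc (1:ℤ) (k-1),
      Finset.filter (fun n => k*n < h*m) (Finset.Icc (1:ℤ) (h-1)) = Finset.Icc 1 (h*m/k) := by
    intro m hm
    have hle := hdivlt m hm
    ext n
    simp only [Finset.mem_filter, Finset.mem_Icc]
    have hc : n * k = k * n := mul_comm n k
    constructor
    · rintro ⟨⟨h1, h2⟩, h3⟩
      exact ⟨h1, by rw [Int.le_ediv_iff_mul_le hk]; omega⟩
    · rintro ⟨h1, h2⟩
      have h2' := (Int.le_ediv_iff_mul_le hk).1 h2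
      have := hne m hm n
      exact ⟨⟨h1, by omega⟩, by omega⟩
  have step2 : ∀ n ∈ Finset.Icc (1:ℤ) (h-1), ∀ m : ℤ,
      (m ∈ Finset.Icc (1:ℤ) (k-1) ∧ h*m < k*n) ↔ m ∈ Finset.Icc (1:ℤ) (k*n/h) := by
    intro n hn m
    have hle := hdivlt2 n hn
    simp only [Finset.mem_Icc] at hn ⊢
    have hc : m * h = h * m := mul_comm m h
    constructor
    · rintro ⟨⟨h1, h2⟩, h3⟩
      exact ⟨h1, by rw [Int.le_ediv_iff_mul_le hh]; omega⟩
    · rintro ⟨h1, h2⟩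
      have h2' := (Int.le_ediv_iff_mul_le hh).1 h2
      have hne2 : h * m ≠ k * n := by
        intro he
        exact hne m (by simp only [Finset.mem_Icc]; omega) n he.symm
      exact ⟨⟨h1, by omega⟩, by omega⟩
  -- total sum over the rectangle
  have total : ∀ m ∈ Finset.Icc (1:ℤ) (k-1),
      ∑ n ∈ Finset.Icc (1:ℤ) (h-1), (2*m)
        = 2*m*(h*m/k) + ∑ n ∈ Finset.Icc (1:ℤ) (h-1), (if h*m < k*n then 2*m else 0) := by
    intro m hm
    rw [← Finset.sum_filter_add_sum_filter_not (Finset.Icc (1:ℤ) (h-1)) (fun n => k*n < h*m)]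
    congr 1
    · rw [step1 m hm, Finset.sum_const, Int.card_Icc]
      have h0 : 0 ≤ h*m/k := by
        apply Int.ediv_nonneg (by simp only [Finset.mem_Icc] at hm; nlinarith) hk.le
      rw [nsmul_eq_mul]
      have : ((h*m/k + 1 - 1).toNat : ℤ) = h*m/k := by omega
      rw [this]
      ring
    · rw [Finset.sum_filter]
      apply Finset.sum_congr rfl
      intro n hn
      have := hne m hm n
      by_cases hlt : h*m < k*n
      · rw [if_pos hlt, if_pos (by omega)]
      · rw [if_neg hlt, if_neg (by omega)]
  have lhs1 : ∑ m ∈ Finset.Icc (1:ℤ) (k-1), ∑ n ∈ Finset.Icc (1:ℤ) (h-1), (2*m:ℤ)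
      = 2 * (∑ m ∈ Finset.Icc (1:ℤ) (k-1), m * (h*m/k))
        + ∑ n ∈ Finset.Icc (1:ℤ) (h-1), (k*n/h) * (k*n/h + 1) := by
    rw [Finset.sum_congr rfl total, Finset.sum_add_distrib]
    congr 1
    · rw [Finset.mul_sum]
      apply Finset.sum_congr rfl
      intro m hm
      ring
    · rw [Finset.sum_comm]
      apply Finset.sum_congr rfl
      intro n hn
      rw [← Finset.sum_filter]
      have hfil : Finset.filter (fun m => h*m < k*n) (Finset.Icc (1:ℤ) (k-1))
          = Finset.Icc 1 (k*n/h) := by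
        ext m
        rw [Finset.mem_filter]
        exact step2 n hn m
      rw [hfil]
      have h0 : 0 ≤ k*n/h := by
        apply Int.ediv_nonneg (by simp only [Finset.mem_Icc] at hn; nlinarith) hh.le
      have := gauss_int (k*n/h) h0
      have e : ∑ m ∈ Finset.Icc (1:ℤ) (k*n/h), (2*m) = 2 * ∑ m ∈ Finset.Icc (1:ℤ) (k*n/h), m := by
        rw [Finset.mul_sum]
      rw [e, this]
  have lhs2 : ∑ m ∈ Finset.Icc (1:ℤ) (k-1), ∑ n ∈ Finset.Icc (1:ℤ) (h-1), (2*m:ℤ)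
      = (h-1) * (k * (k-1)) := by
    have hcard : ∀ m : ℤ, ∑ _n ∈ Finset.Icc (1:ℤ) (h-1), (2*m:ℤ) = (h-1) * (2*m) := by
      intro m
      rw [Finset.sum_const, nsmul_eq_mul, Int.card_Icc]
      have : ((h - 1 + 1 - 1).toNat : ℤ) = h - 1 := by omega
      rw [this]
    rw [Finset.sum_congr rfl (fun m _ => hcard m), ← Finset.mul_sum, ← Finset.mul_sum,
      gauss_int (k-1) (by omega)]
    ring
  omega

lemma inv_exists_of_coprime (h k : ℤ) (hco : IsCoprime h k) :
    ∃ u : ℤ, h * u % k = 1 % k := by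
  obtain ⟨u, v, huv⟩ := hco
  refine ⟨u, ?_⟩
  have : k ∣ h * u - 1 := ⟨-v, by linarith [huv]⟩
  obtain ⟨c, hc⟩ := this
  have : h * u = 1 + k * c := by linarith
  rw [this, Int.add_mul_emod_self_left]

lemma dedekind_reciprocity (h k : ℤ) (hh : 0 < h) (hk : 0 < k) (hco : IsCoprime h k) :
    dedekindSum h k + dedekindSum k h
      = -1/4 + ((h:ℚ)/k + (k:ℚ)/h + 1/((h:ℚ)*(k:ℚ)))/12 := by
  obtain ⟨u, hu⟩ := inv_exists_of_coprime h k hco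
  obtain ⟨v, hv⟩ := inv_exists_of_coprime k h hco.symm
  have hH0 : (h:ℚ) ≠ 0 := Int.cast_ne_zero.2 hh.ne'
  have hK0 : (k:ℚ) ≠ 0 := Int.cast_ne_zero.2 hk.ne'
  set H : ℚ := (h:ℚ)
  set K : ℚ := (k:ℚ)
  set Sk : ℚ := ∑ m ∈ Finset.Icc (1:ℤ) (k-1), (m:ℚ) * ((h*m % k : ℤ):ℚ) with hSk_def
  set Sh : ℚ := ∑ n ∈ Finset.Icc (1:ℤ) (h-1), (n:ℚ) * ((k*n % h : ℤ):ℚ) with hSh_def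
  set Tq : ℚ := ∑ m ∈ Finset.Icc (1:ℤ) (k-1), (m:ℚ) * ((h*m / k : ℤ):ℚ) with hTq_def
  set Gq : ℚ := ∑ n ∈ Finset.Icc (1:ℤ) (h-1),
      ((k*n / h : ℤ):ℚ) * (((k*n / h : ℤ):ℚ) + 1) with hGq_def
  have ded1 : dedekindSum h k = Sk / K^2 - (K-1)/4 := dedekindSum_eq h k u hk hu
  have ded2 : dedekindSum k h = Sh / H^2 - (H-1)/4 := dedekindSum_eq k h v hh hv
  -- cast of the double counting identity
  have hcast : 2 * Tq + Gq = (H-1)*(K*(K-1)) := by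
    have hz := double_count h k hh hk hco.symm
    have := congrArg (fun z : ℤ => (z:ℚ)) hz
    push_cast at this
    rw [hTq_def, hGq_def]
    push_cast
    convert this using 2 <;> push_cast <;> ring
  -- K * Tq
  have hT : K * Tq = H * ((K-1)*K*(2*K-1)/6) - Sk := by
    have e : ∀ m ∈ Finset.Icc (1:ℤ) (k-1),
        K * ((m:ℚ) * ((h*m / k : ℤ):ℚ))
          = H*(m:ℚ)^2 - (m:ℚ) * ((h*m % k : ℤ):ℚ) := by
      intro m _
      have ez : (k * (h*m/k) : ℤ) = h*m - h*m%k := by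
        rw [Int.emod_def]; ring
      have eq : K * ((h*m/k:ℤ):ℚ) = H*(m:ℚ) - ((h*m%k:ℤ):ℚ) := by
        have := congrArg (fun z : ℤ => (z:ℚ)) ez
        push_cast at this
        rw [show K * ((h*m/k:ℤ):ℚ) = ((k:ℤ):ℚ) * ((h*m/k:ℤ):ℚ) from rfl]
        push_cast
        linarith [this]
      calc K * ((m:ℚ) * ((h*m / k : ℤ):ℚ)) = (m:ℚ) * (K * ((h*m/k:ℤ):ℚ)) := by ring
        _ = (m:ℚ) * (H*(m:ℚ) - ((h*m%k:ℤ):ℚ)) := by rw [eq]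
        _ = H*(m:ℚ)^2 - (m:ℚ) * ((h*m % k : ℤ):ℚ) := by ring
    rw [hTq_def, Finset.mul_sum, Finset.sum_congr rfl e, Finset.sum_sub_distrib,
      ← Finset.mul_sum, gauss_sq_q (k-1) (by omega), ← hSk_def]
    push_cast
    ring
  -- H^2 * Gq
  have hG : H^2 * Gq = K^2*((H-1)*H*(2*H-1)/6) - 2*K*Sh + (H-1)*H*(2*H-1)/6
      + H*K*((H-1)*H/2) - H*((H-1)*H/2) := by
    have e : ∀ n ∈ Finset.Icc (1:ℤ) (h-1),
        H^2 * (((k*n / h : ℤ):ℚ) * (((k*n / h : ℤ):ℚ) + 1))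
          = K^2*(n:ℚ)^2 - 2*K*((n:ℚ)*((k*n%h:ℤ):ℚ)) + ((k*n%h:ℤ):ℚ)^2
            + H*K*(n:ℚ) - H*((k*n%h:ℤ):ℚ) := by
      intro n _
      have ez : (h * (k*n/h) : ℤ) = k*n - k*n%h := by
        rw [Int.emod_def]; ring
      have eq : H * ((k*n/h:ℤ):ℚ) = K*(n:ℚ) - ((k*n%h:ℤ):ℚ) := by
        have := congrArg (fun z : ℤ => (z:ℚ)) ez
        push_cast at this
        rw [show H * ((k*n/h:ℤ):ℚ) = ((h:ℤ):ℚ) * ((k*n/h:ℤ):ℚ) from rfl]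
        push_cast
        linarith [this]
      have expand : H^2 * (((k*n / h : ℤ):ℚ) * (((k*n / h : ℤ):ℚ) + 1))
          = (H * ((k*n/h:ℤ):ℚ))^2 + H * (H * ((k*n/h:ℤ):ℚ)) := by ring
      rw [expand, eq]
      ring
    have hsplit : ∑ n ∈ Finset.Icc (1:ℤ) (h-1),
        (K^2*(n:ℚ)^2 - 2*K*((n:ℚ)*((k*n%h:ℤ):ℚ)) + ((k*n%h:ℤ):ℚ)^2
          + H*K*(n:ℚ) - H*((k*n%h:ℤ):ℚ))
        = K^2 * (∑ n ∈ Finset.Icc (1:ℤ) (h-1), (n:ℚ)^2)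
          - 2*K*Sh + (∑ n ∈ Finset.Icc (1:ℤ) (h-1), ((k*n%h:ℤ):ℚ)^2)
          + H*K*(∑ n ∈ Finset.Icc (1:ℤ) (h-1), (n:ℚ))
          - H*(∑ n ∈ Finset.Icc (1:ℤ) (h-1), ((k*n%h:ℤ):ℚ)) := by
      rw [hSh_def]
      simp only [Finset.sum_add_distrib, Finset.sum_sub_distrib, ← Finset.mul_sum]
    have hr2 : ∑ n ∈ Finset.Icc (1:ℤ) (h-1), ((k*n%h:ℤ):ℚ)^2
        = ∑ n ∈ Finset.Icc (1:ℤ) (h-1), (n:ℚ)^2 :=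
      sum_reindex h hh k v hv (fun z => (z:ℚ)^2)
    have hr1 : ∑ n ∈ Finset.Icc (1:ℤ) (h-1), ((k*n%h:ℤ):ℚ)
        = ∑ n ∈ Finset.Icc (1:ℤ) (h-1), (n:ℚ) :=
      sum_reindex h hh k v hv (fun z => (z:ℚ))
    rw [hGq_def, Finset.mul_sum, Finset.sum_congr rfl e, hsplit, hr2, hr1,
      gauss_sq_q (h-1) (by omega), gauss_q (h-1) (by omega)]
    push_cast
    ring
  have main : 12*H^2*Sk + 12*K^2*Sh
      = 3*H^2*K^2*(K-1) + 3*H^2*K^2*(H-1) - 3*H^2*K^2 + H^3*K + H*K^3 + H*K := by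
    linear_combination (12*H^2) * hT + (6*K) * hG + (-6*H^2*K) * hcast
  rw [ded1, ded2, ← sub_eq_zero]
  have h12 : (12:ℚ)*H^2*K^2 ≠ 0 := by positivity
  have expand : (Sk/K^2 - (K-1)/4 + (Sh/H^2 - (H-1)/4)
        - (-1/4 + (H/K + K/H + 1/(H*K))/12)) * (12*H^2*K^2)
      = 12*H^2*Sk + 12*K^2*Sh - (3*H^2*K^2*(K-1) + 3*H^2*K^2*(H-1) - 3*H^2*K^2
        + H^3*K + H*K^3 + H*K) := by
    field_simp
    ring
  have hz : (Sk/K^2 - (K-1)/4 + (Sh/H^2 - (H-1)/4)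
      - (-1/4 + (H/K + K/H + 1/(H*K))/12)) * (12*H^2*K^2) = 0 := by
    rw [expand]
    linarith [main]
  exact (mul_eq_zero.1 hz).resolve_right h12

lemma dedekindSum_neg_left (h k : ℤ) : dedekindSum (-h) k = - dedekindSum h k := by
  rw [dedekindSum, dedekindSum, ← Finset.sum_neg_distrib]
  apply Finset.sum_congr rfl
  intro m _
  have e : ((-h : ℤ):ℚ) * m / k = -((h:ℚ)*m/k) := by push_cast; ring
  rw [e, saw_neg]
  ring

lemma dedekindSum_inv (h h' k : ℤ) (hk : 0 < k) (hh : h * h' % k = 1 % k) :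
    dedekindSum h' k = dedekindSum h k := by
  have hh2 : h' * h % k = 1 % k := by rw [mul_comm]; exact hh
  rw [dedekindSum_eq h' k h hk hh2, dedekindSum_eq h k h' hk hh]
  congr 1
  congr 1
  have hre := sum_reindex k hk h h' hh (fun z => (z:ℚ) * (((h' * z % k : ℤ)):ℚ))
  rw [← hre]
  apply Finset.sum_congr rfl
  intro m hm
  simp only [Finset.mem_Icc] at hm
  rw [inv_emod_cancel k h h' m hk hh hm.1 hm.2]
  ring

lemma dedekindSum_neg_inv (h h' k : ℤ) (hk : 0 < k) (hh : h * h' % k = (-1) % k) :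
    dedekindSum h' k = - dedekindSum h k := by
  have hh2 : h * (-h') % k = 1 % k := by
    have e : h * (-h') = (-1) * (h * h') := by ring
    rw [e, Int.mul_emod, hh, ← Int.mul_emod]
    norm_num
  have := dedekindSum_inv h (-h') k hk hh2
  rw [dedekindSum_neg_left] at this
  linarith

lemma final_alg (X Y Z W A B C σy σz : ℚ)
    (hX : X ≠ 0) (hY : Y ≠ 0) (hZ : Z ≠ 0)
    (hdet : X*W - Y*Z = 1)
    (hA : A = -1/4 + (X/(σy*Y) + (σy*Y)/X + 1/(X*(σy*Y)))/12 - σy*C)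
    (hB : B = -1/4 + (X/(σz*Z) + (σz*Z)/X + 1/(X*(σz*Z)))/12 + σz*C)
    (hσy : σy = 1 ∨ σy = -1) (hσz : σz = 1 ∨ σz = -1) :
    (W+X)/Y - σy*(3+12*A) = -((X+W)/Z - σz*(3+12*B)) := by
  have neg3 : ∀ U V : ℚ, U/(-1*V) + (-1)*V/U + 1/(U*((-1)*V))
      = -(U/V + V/U + 1/(U*V)) := by
    intro U V
    have e1 : U/(-1*V) = -(U/V) := by rw [neg_one_mul, div_neg]
    have e2 : (-1)*V/U = -(V/U) := by rw [neg_one_mul, neg_div]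
    have e3 : 1/(U*((-1)*V)) = -(1/(U*V)) := by rw [neg_one_mul, mul_neg, div_neg]
    rw [e1, e2, e3]
    ring
  have eA : σy*(3+12*A) = X/Y + Y/X + 1/(X*Y) - 12*C := by
    rcases hσy with h|h <;> subst h
    · rw [hA]; ring
    · rw [hA, neg3 X Y]; ring
  have eB : σz*(3+12*B) = X/Z + Z/X + 1/(X*Z) + 12*C := by
    rcases hσz with h|h <;> subst h
    · rw [hB]; ring
    · rw [hB, neg3 X Z]; ring
  rw [eA, eB, ← sub_eq_zero, sub_neg_eq_add]
  have hXYZ : X*Y*Z ≠ 0 := by simp [hX, hY, hZ]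
  have key : ((W+X)/Y - (X/Y + Y/X + 1/(X*Y) - 12*C)
      + ((X+W)/Z - (X/Z + Z/X + 1/(X*Z) + 12*C))) * (X*Y*Z)
      = (X*W - Y*Z - 1) * (Y+Z) := by
    field_simp
    ring
  have h0 : X*W - Y*Z - 1 = 0 := by rw [hdet]; ring
  rw [h0, zero_mul] at key
  exact (mul_eq_zero.1 key).resolve_right hXYZ

/-- The invariant n_M = (x+w)/z - sign(z)·(3 + 12·s(w,|z|)) for M = (x y; z w). -/
noncomputable def nMat (M : Matrix (Fin 2) (Fin 2) ℤ) : ℚ :=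
  ((M 0 0 + M 1 1 : ℤ) : ℚ) / ((M 1 0 : ℤ) : ℚ)
    - ((M 1 0).sign : ℚ) * (3 + 12 * dedekindSum (M 1 1) |M 1 0|)

theorem nMat_conj_swap (M M' : Matrix (Fin 2) (Fin 2) ℤ)
    (hdet : M.det = 1) (hz : M 1 0 ≠ 0) (hx : 0 < M 0 0) (hy : M 0 1 ≠ 0)
    (hM' : M' = !![0, 1; 1, 0] * M * !![0, 1; 1, 0]) :
    nMat M' = - nMat M := by
  have hdet2 : M 0 0 * M 1 1 - M 0 1 * M 1 0 = 1 := by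
    rw [Matrix.det_fin_two] at hdet; exact hdet
  have e00 : M' 0 0 = M 1 1 := by
    subst hM'; simp [Matrix.mul_apply, Matrix.vecMul, dotProduct, Fin.sum_univ_two]
  have e10 : M' 1 0 = M 0 1 := by
    subst hM'; simp [Matrix.mul_apply, Matrix.vecMul, dotProduct, Fin.sum_univ_two]
  have e11 : M' 1 1 = M 0 0 := by
    subst hM'; simp [Matrix.mul_apply, Matrix.vecMul, dotProduct, Fin.sum_univ_two]
  have hay : 0 < |M 0 1| := abs_pos.2 hy
  have haz : 0 < |M 1 0| := abs_pos.2 hz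
  -- coprimality
  have hco_xy : IsCoprime (M 0 0) (M 0 1) := ⟨M 1 1, -(M 1 0), by linarith [hdet2]⟩
  have hco_xz : IsCoprime (M 0 0) (M 1 0) := ⟨M 1 1, -(M 0 1), by linarith [hdet2]⟩
  have hco_xay : IsCoprime (M 0 0) |M 0 1| := by
    rcases abs_choice (M 0 1) with h|h <;> rw [h]
    · exact hco_xy
    · exact hco_xy.neg_right
  have hco_xaz : IsCoprime (M 0 0) |M 1 0| := by
    rcases abs_choice (M 1 0) with h|h <;> rw [h]
    · exact hco_xz
    · exact hco_xz.neg_right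
  -- w ≡ x⁻¹ mod |z|
  have hwx : dedekindSum (M 1 1) |M 1 0| = dedekindSum (M 0 0) |M 1 0| := by
    apply dedekindSum_inv (M 0 0) (M 1 1) _ haz
    rw [Int.emod_eq_emod_iff_emod_sub_eq_zero]
    apply Int.emod_eq_zero_of_dvd
    rw [abs_dvd]
    exact ⟨M 0 1, by linarith [hdet2, mul_comm (M 0 1) (M 1 0), mul_comm (M 1 0) (M 0 1)]⟩
  -- s(z,x) = - s(y,x)
  have hzy : dedekindSum (M 1 0) (M 0 0) = - dedekindSum (M 0 1) (M 0 0) := by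
    apply dedekindSum_neg_inv (M 0 1) (M 1 0) _ hx
    rw [Int.emod_eq_emod_iff_emod_sub_eq_zero]
    apply Int.emod_eq_zero_of_dvd
    exact ⟨M 1 1, by linarith [hdet2]⟩
  -- signs
  set σy : ℚ := ((M 0 1).sign : ℚ) with hσy_def
  set σz : ℚ := ((M 1 0).sign : ℚ) with hσz_def
  have hsgny : (0 < M 0 1 ∧ σy = 1 ∧ |M 0 1| = M 0 1) ∨
      (M 0 1 < 0 ∧ σy = -1 ∧ |M 0 1| = -(M 0 1)) := by
    rcases lt_trichotomy (M 0 1) 0 with h|h|h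
    · right
      refine ⟨h, ?_, abs_of_neg h⟩
      rw [hσy_def, Int.sign_eq_neg_one_of_neg h]; norm_num
    · exact absurd h hy
    · left
      refine ⟨h, ?_, abs_of_pos h⟩
      rw [hσy_def, Int.sign_eq_one_of_pos h]; norm_num
  have hsgnz : (0 < M 1 0 ∧ σz = 1 ∧ |M 1 0| = M 1 0) ∨
      (M 1 0 < 0 ∧ σz = -1 ∧ |M 1 0| = -(M 1 0)) := by
    rcases lt_trichotomy (M 1 0) 0 with h|h|h
    · right
      refine ⟨h, ?_, abs_of_neg h⟩
      rw [hσz_def, Int.sign_eq_neg_one_of_neg h]; norm_num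
    · exact absurd h hz
    · left
      refine ⟨h, ?_, abs_of_pos h⟩
      rw [hσz_def, Int.sign_eq_one_of_pos h]; norm_num
  have habsY : ((|M 0 1| : ℤ):ℚ) = σy * ((M 0 1 : ℤ):ℚ) := by
    rcases hsgny with ⟨_, h1, h2⟩|⟨_, h1, h2⟩ <;> rw [h1, h2] <;> push_cast <;> ring
  have habsZ : ((|M 1 0| : ℤ):ℚ) = σz * ((M 1 0 : ℤ):ℚ) := by
    rcases hsgnz with ⟨_, h1, h2⟩|⟨_, h1, h2⟩ <;> rw [h1, h2] <;> push_cast <;> ring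
  have hsy : dedekindSum |M 0 1| (M 0 0) = σy * dedekindSum (M 0 1) (M 0 0) := by
    rcases hsgny with ⟨_, h1, h2⟩|⟨_, h1, h2⟩ <;> rw [h1, h2]
    · ring
    · rw [dedekindSum_neg_left]; ring
  have hsz : dedekindSum |M 1 0| (M 0 0) = σz * dedekindSum (M 1 0) (M 0 0) := by
    rcases hsgnz with ⟨_, h1, h2⟩|⟨_, h1, h2⟩ <;> rw [h1, h2]
    · ring
    · rw [dedekindSum_neg_left]; ring
  -- reciprocity
  have hrecY := dedekind_reciprocity (M 0 0) |M 0 1| hx hay hco_xay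
  have hrecZ := dedekind_reciprocity (M 0 0) |M 1 0| hx haz hco_xaz
  rw [habsY, hsy] at hrecY
  rw [habsZ, hsz, hzy] at hrecZ
  have hA : dedekindSum (M 0 0) |M 0 1|
      = -1/4 + (((M 0 0:ℤ):ℚ)/(σy*((M 0 1:ℤ):ℚ)) + (σy*((M 0 1:ℤ):ℚ))/((M 0 0:ℤ):ℚ)
        + 1/(((M 0 0:ℤ):ℚ)*(σy*((M 0 1:ℤ):ℚ))))/12 - σy * dedekindSum (M 0 1) (M 0 0) := by
    linarith [hrecY]
  have hB : dedekindSum (M 1 1) |M 1 0|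
      = -1/4 + (((M 0 0:ℤ):ℚ)/(σz*((M 1 0:ℤ):ℚ)) + (σz*((M 1 0:ℤ):ℚ))/((M 0 0:ℤ):ℚ)
        + 1/(((M 0 0:ℤ):ℚ)*(σz*((M 1 0:ℤ):ℚ))))/12 + σz * dedekindSum (M 0 1) (M 0 0) := by
    rw [hwx]
    linarith [hrecZ]
  rw [nMat, nMat, e00, e10, e11]
  have hXq : ((M 0 0:ℤ):ℚ) ≠ 0 := Int.cast_ne_zero.2 hx.ne'
  have hYq : ((M 0 1:ℤ):ℚ) ≠ 0 := Int.cast_ne_zero.2 hy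
  have hZq : ((M 1 0:ℤ):ℚ) ≠ 0 := Int.cast_ne_zero.2 hz
  have hdetq : ((M 0 0:ℤ):ℚ) * ((M 1 1:ℤ):ℚ) - ((M 0 1:ℤ):ℚ) * ((M 1 0:ℤ):ℚ) = 1 := by
    exact_mod_cast congrArg (fun t : ℤ => (t:ℚ)) hdet2
  have := final_alg ((M 0 0:ℤ):ℚ) ((M 0 1:ℤ):ℚ) ((M 1 0:ℤ):ℚ) ((M 1 1:ℤ):ℚ)
    (dedekindSum (M 0 0) |M 0 1|) (dedekindSum (M 1 1) |M 1 0|)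
    (dedekindSum (M 0 1) (M 0 0)) σy σz hXq hYq hZq hdetq hA hB
    (by rcases hsgny with ⟨_, h1, _⟩|⟨_, h1, _⟩ <;> [left; right] <;> exact h1)
    (by rcases hsgnz with ⟨_, h1, _⟩|⟨_, h1, _⟩ <;> [left; right] <;> exact h1)
  push_cast at this ⊢
  convert this using 2 <;> push_cast <;> ring
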